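/- Let V be a finite-dimensional real vector space, L a symmetric 2n-multilinear form (n ≥ 2), q a symmetric bilinear form, and C > 0 with L(x,...,x) = C·q(x,x)^n for all x. Suppose d, h, a ∈ V satisfy q(h,h) = 0, q(d,h) = 0, q(d,a) > 0, and q(a,h) > 0. Then L(d, h, ..., h, a, ..., a) ≠ 0, where h appears n−1 times and a appears n times. -/

import Mathlib

open Polynomial Finset

theorem aux_antidiag1 : (Finset.HasAntidiagonal.antidiagonal 1 : Finset (ℕ × ℕ)) = {(0,1),(1,0)} := by decide

theorem aux_coeff01 (a0 a1 a2 : ℝ) (k : ℕ) :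
    ((C a2 * X^2 + C a1 * X + C a0)^k).coeff 0 = a0^k ∧
    ((C a2 * X^2 + C a1 * X + C a0)^k).coeff 1 = k * a1 * a0^(k-1) := by
  have hc0 : (C a2 * X^2 + C a1 * X + C a0).coeff 0 = a0 := by simp
  have hc1 : (C a2 * X^2 + C a1 * X + C a0).coeff 1 = a1 := by
    simp [coeff_X_pow]
  induction k with
  | zero => refine ⟨by simp, by simp [Polynomial.coeff_one]⟩
  | succ k ih =>
    obtain ⟨h0, h1⟩ := ih
    rw [pow_succ]
    refine ⟨?_, ?_⟩
    · rw [Polynomial.mul_coeff_zero, h0, hc0, pow_succ]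
    · rw [Polynomial.coeff_mul, aux_antidiag1]
      rw [Finset.sum_insert (by decide), Finset.sum_singleton]
      simp only [h0, h1, hc0, hc1]
      have : (k:ℝ) * a1 * a0^(k-1) * a0 = k * a1 * a0^k := by
        cases k with
        | zero => simp
        | succ k => rw [Nat.succ_sub_one, pow_succ]; ring
      push_cast
      rw [this]; ring

theorem aux_coeff_lin (b e : ℝ) (k : ℕ) :
    ((C b * X + C e)^k).coeff k = b^k := by
  have h1 : (C b * X + C e).natDegree ≤ 1 := by
    apply Polynomial.natDegree_add_le_of_degree_le
    · exact (Polynomial.natDegree_C_mul_le b X).trans (by simp)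
    · simp
  have := Polynomial.coeff_pow_of_natDegree_le (m := k) h1
  rw [mul_one] at this
  rw [this]
  congr 1
  simp [coeff_X_pow]

/-- the s t^{n-1} coefficient is nonzero (Step 5 contradiction). -/
theorem stmt14 {V : Type*} [AddCommGroup V] [Module ℝ V] [FiniteDimensional ℝ V]
    (n : ℕ) (hn : 2 ≤ n)
    (L : MultilinearMap ℝ (fun _ : Fin (2*n) => V) ℝ)
    (hLsymm : ∀ (σ : Equiv.Perm (Fin (2*n))) (v : Fin (2*n) → V), L (v ∘ σ) = L v)
    (q : V →ₗ[ℝ] V →ₗ[ℝ] ℝ) (hqsymm : ∀ x y, q x y = q y x)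
    (C : ℝ) (hC : 0 < C)
    (hFujiki : ∀ x : V, L (fun _ => x) = C * (q x x)^n)
    (d h a : V) (hhh : q h h = 0) (hdh : q d h = 0)
    (hda : 0 < q d a) (hah : 0 < q a h) :
    L (fun i => if (i : ℕ) = 0 then d else if (i : ℕ) < n then h else a) ≠ 0 := by
  classical
  set A : ℝ := q d d with hA
  set B : ℝ := 2 * q d a with hB
  set D : ℝ := 2 * q a h with hD
  set E : ℝ := q a a with hE
  set w : Fin 3 → V := ![d, h, a] with hw
  set cnt : (Fin (2*n) → Fin 3) → Fin 3 → ℕ :=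
    fun r j => (Finset.univ.filter fun i => r i = j).card with hcnt
  -- total count
  have hcnt_total : ∀ r : Fin (2*n) → Fin 3, cnt r 0 + cnt r 1 + cnt r 2 = 2*n := by
    intro r
    have := Finset.sum_fiberwise (Finset.univ : Finset (Fin (2*n))) r (fun _ => (1:ℕ))
    simp only [Finset.sum_const, smul_eq_mul, mul_one, Finset.card_univ, Fintype.card_fin] at this
    rw [Fin.sum_univ_three] at this
    exact this
  -- symmetry: L (w ∘ r) depends only on counts
  have hsym : ∀ r r' : Fin (2*n) → Fin 3, (∀ j, cnt r j = cnt r' j) →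
      L (w ∘ r) = L (w ∘ r') := by
    intro r r' hc
    have e : ∀ j, {x // r' x = j} ≃ {x // r x = j} := fun j =>
      Fintype.equivOfCardEq (by
        rw [Fintype.card_subtype, Fintype.card_subtype]
        exact (hc j).symm)
    let σ : Equiv.Perm (Fin (2*n)) := Equiv.ofFiberEquiv e
    have hσ : ∀ x, r (σ x) = r' x := fun x => Equiv.ofFiberEquiv_map e x
    have hco : (w ∘ r) ∘ σ = w ∘ r' := by
      funext x
      simp only [Function.comp_apply, hσ]
    rw [← hLsymm σ (w ∘ r), hco]
  -- expansion
  have hexp : ∀ s t : ℝ,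
      (∑ r : Fin (2*n) → Fin 3, s ^ cnt r 0 * t ^ cnt r 1 * L (w ∘ r))
        = C * (A * s^2 + B * s + (D * t + E))^n := by
    intro s t
    set k : Fin 3 → ℝ := ![s, t, 1] with hk
    have hx : (s • d + t • h + a) = ∑ j : Fin 3, k j • w j := by
      rw [Fin.sum_univ_three]
      simp [hk, hw]
    have hL : L (fun _ => s • d + t • h + a)
        = ∑ r : Fin (2*n) → Fin 3, L (fun i => k (r i) • w (r i)) := by
      calc L (fun _ => s • d + t • h + a) = L (fun _ => ∑ j : Fin 3, k j • w j) := by rw [hx]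
        _ = _ := L.map_sum (g := fun _ j => k j • w j)
    have hterm : ∀ r : Fin (2*n) → Fin 3,
        L (fun i => k (r i) • w (r i)) = s ^ cnt r 0 * t ^ cnt r 1 * L (w ∘ r) := by
      intro r
      have := L.map_smul_univ (fun i => k (r i)) (fun i => w (r i))
      rw [this]
      have hp : (∏ i, k (r i)) = s ^ cnt r 0 * t ^ cnt r 1 := by
        rw [← Finset.prod_fiberwise' Finset.univ r k]
        simp only [Finset.prod_const]
        rw [Fin.prod_univ_three]
        simp [hk, hcnt]
      rw [hp, smul_eq_mul]
      rfl
    have hq : q (s • d + t • h + a) (s • d + t • h + a) = A * s^2 + B * s + (D * t + E) := by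
      have h1 : q h d = 0 := by rw [hqsymm]; exact hdh
      have h2 : q a d = q d a := hqsymm a d
      have h3 : q h a = q a h := hqsymm h a
      simp only [map_add, map_smul, LinearMap.add_apply, LinearMap.smul_apply, smul_eq_mul]
      rw [hhh, hdh, h1, h2, h3, hA, hB, hD, hE]
      ring
    calc (∑ r : Fin (2*n) → Fin 3, s ^ cnt r 0 * t ^ cnt r 1 * L (w ∘ r))
        = ∑ r : Fin (2*n) → Fin 3, L (fun i => k (r i) • w (r i)) := by
          exact Finset.sum_congr rfl (fun r _ => (hterm r).symm)
      _ = L (fun _ => s • d + t • h + a) := hL.symm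
      _ = C * (q (s • d + t • h + a) (s • d + t • h + a))^n := hFujiki _
      _ = _ := by rw [hq]
  -- stage 1 : coefficient of s^1
  have hstage1 : ∀ t : ℝ,
      (∑ r ∈ Finset.univ.filter (fun r : Fin (2*n) → Fin 3 => cnt r 0 = 1),
        t ^ cnt r 1 * L (w ∘ r)) = C * (n * B * (D*t+E)^(n-1)) := by
    intro t
    set p1 : ℝ[X] := ∑ r : Fin (2*n) → Fin 3,
      Polynomial.C (t ^ cnt r 1 * L (w ∘ r)) * X ^ cnt r 0 with hp1
    set p2 : ℝ[X] := Polynomial.C C *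
      (Polynomial.C A * X^2 + Polynomial.C B * X + Polynomial.C (D*t+E))^n with hp2
    have heq : p1 = p2 := by
      apply Polynomial.funext
      intro s
      rw [hp1, hp2]
      rw [Polynomial.eval_finset_sum]
      simp only [eval_mul, eval_pow, eval_add, eval_C, eval_X]
      calc (∑ r : Fin (2*n) → Fin 3, t ^ cnt r 1 * L (w ∘ r) * s ^ cnt r 0)
          = ∑ r : Fin (2*n) → Fin 3, s ^ cnt r 0 * t ^ cnt r 1 * L (w ∘ r) := by
            exact Finset.sum_congr rfl (fun r _ => by ring)
        _ = C * (A * s^2 + B * s + (D * t + E))^n := hexp s t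
    have hc1 : p1.coeff 1 = ∑ r ∈ Finset.univ.filter (fun r : Fin (2*n) → Fin 3 => cnt r 0 = 1),
        t ^ cnt r 1 * L (w ∘ r) := by
      rw [hp1, Polynomial.finset_sum_coeff]
      rw [Finset.sum_filter]
      apply Finset.sum_congr rfl
      intro r _
      rw [Polynomial.coeff_C_mul, Polynomial.coeff_X_pow]
      by_cases hr : cnt r 0 = 1
      · simp [hr]
      · rw [if_neg (fun hh => hr hh.symm), mul_zero, if_neg hr]
    have hc2 : p2.coeff 1 = C * (n * B * (D*t+E)^(n-1)) := by
      rw [hp2, Polynomial.coeff_C_mul, (aux_coeff01 (D*t+E) B A n).2]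
    rw [← hc1, heq, hc2]
  -- stage 2 : coefficient of t^(n-1)
  have hstage2 :
      (∑ r ∈ Finset.univ.filter
          (fun r : Fin (2*n) → Fin 3 => cnt r 0 = 1 ∧ cnt r 1 = n-1),
        L (w ∘ r)) = C * (n * B) * D^(n-1) := by
    set S1 := Finset.univ.filter (fun r : Fin (2*n) → Fin 3 => cnt r 0 = 1) with hS1
    set p1 : ℝ[X] := ∑ r ∈ S1, Polynomial.C (L (w ∘ r)) * X ^ cnt r 1 with hp1
    set p2 : ℝ[X] := Polynomial.C (C * (n * B)) *
      (Polynomial.C D * X + Polynomial.C E)^(n-1) with hp2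
    have heq : p1 = p2 := by
      apply Polynomial.funext
      intro t
      rw [hp1, hp2, Polynomial.eval_finset_sum]
      simp only [eval_mul, eval_pow, eval_add, eval_C, eval_X]
      calc (∑ r ∈ S1, L (w ∘ r) * t ^ cnt r 1)
          = ∑ r ∈ S1, t ^ cnt r 1 * L (w ∘ r) := by
            exact Finset.sum_congr rfl (fun r _ => by ring)
        _ = C * (n * B * (D*t+E)^(n-1)) := hstage1 t
        _ = _ := by ring
    have hc1 : p1.coeff (n-1) = ∑ r ∈ Finset.univ.filter
        (fun r : Fin (2*n) → Fin 3 => cnt r 0 = 1 ∧ cnt r 1 = n-1), L (w ∘ r) := by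
      rw [hp1, Polynomial.finset_sum_coeff]
      have hff : Finset.univ.filter (fun r : Fin (2*n) → Fin 3 => cnt r 0 = 1 ∧ cnt r 1 = n-1)
          = S1.filter (fun r => cnt r 1 = n-1) := by
        rw [hS1, Finset.filter_filter]
      have hterm : ∀ r ∈ S1, (Polynomial.C (L (w ∘ r)) * X ^ cnt r 1).coeff (n-1)
          = if cnt r 1 = n-1 then L (w ∘ r) else 0 := by
        intro r _
        rw [Polynomial.coeff_C_mul, Polynomial.coeff_X_pow]
        by_cases hr : cnt r 1 = n-1
        · simp [hr]
        · rw [if_neg (fun hh => hr hh.symm), mul_zero, if_neg hr]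
      rw [Finset.sum_congr rfl hterm, hff]
      exact (Finset.sum_filter _ _).symm
    have hc2 : p2.coeff (n-1) = C * (n * B) * D^(n-1) := by
      rw [hp2, Polynomial.coeff_C_mul, aux_coeff_lin]
    rw [← hc1, heq, hc2]
  -- the specific assignment
  set S2 := Finset.univ.filter
    (fun r : Fin (2*n) → Fin 3 => cnt r 0 = 1 ∧ cnt r 1 = n-1) with hS2
  set r0 : Fin (2*n) → Fin 3 :=
    fun i => if (i:ℕ) = 0 then 0 else if (i:ℕ) < n then 1 else 2 with hr0
  have htarget : (fun i : Fin (2*n) =>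
      if (i:ℕ) = 0 then d else if (i:ℕ) < n then h else a) = w ∘ r0 := by
    funext i
    by_cases h1 : (i:ℕ) = 0 <;> by_cases h2 : (i:ℕ) < n <;>
      simp [hr0, hw, h1, h2]
  have hiff0 : ∀ i : Fin (2*n), r0 i = 0 ↔ (i:ℕ) = 0 := by
    intro i
    by_cases h1 : (i:ℕ) = 0 <;> by_cases h2 : (i:ℕ) < n <;>
      simp [hr0, h1, h2]
  have hiff1 : ∀ i : Fin (2*n), r0 i = 1 ↔ ((i:ℕ) ≠ 0 ∧ (i:ℕ) < n) := by
    intro i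
    by_cases h1 : (i:ℕ) = 0 <;> by_cases h2 : (i:ℕ) < n <;>
      simp [hr0, h1, h2]
  have hcount0 : cnt r0 0 = 1 := by
    have hfe : (Finset.univ.filter fun i : Fin (2*n) => r0 i = 0)
        = {(⟨0, by omega⟩ : Fin (2*n))} := by
      ext i
      simp only [Finset.mem_filter, Finset.mem_univ, true_and, Finset.mem_singleton, hiff0 i]
      constructor
      · intro hh; exact Fin.ext hh
      · intro hh; exact hh ▸ rfl
    simp only [hcnt, hfe, Finset.card_singleton]
  have hcount1 : cnt r0 1 = n - 1 := by
    have himg : (Finset.univ.filter fun i : Fin (2*n) => r0 i = 1).image Fin.val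
        = Finset.Ico 1 n := by
      ext x
      simp only [Finset.mem_image, Finset.mem_filter, Finset.mem_univ, true_and,
        Finset.mem_Ico]
      constructor
      · rintro ⟨i, hi, rfl⟩
        rw [hiff1] at hi
        omega
      · intro hx
        have hx2 : x < 2*n := by omega
        refine ⟨⟨x, hx2⟩, ?_, rfl⟩
        rw [hiff1]
        show x ≠ 0 ∧ x < n
        omega
    have := Finset.card_image_of_injective
      (Finset.univ.filter fun i : Fin (2*n) => r0 i = 1) Fin.val_injective
    simp only [hcnt]
    rw [← this, himg, Nat.card_Ico]
  have hr0mem : r0 ∈ S2 := by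
    rw [hS2, Finset.mem_filter]
    exact ⟨Finset.mem_univ _, hcount0, hcount1⟩
  have hall : ∀ r ∈ S2, L (w ∘ r) = L (w ∘ r0) := by
    intro r hr
    rw [hS2, Finset.mem_filter] at hr
    apply hsym
    intro j
    have h2 : cnt r 2 = cnt r0 2 := by
      have t1 := hcnt_total r
      have t2 := hcnt_total r0
      omega
    fin_cases j
    · exact hr.2.1.trans hcount0.symm
    · exact hr.2.2.trans hcount1.symm
    · exact h2
  have hBpos : (0:ℝ) < B := by rw [hB]; linarith
  have hDpos : (0:ℝ) < D := by rw [hD]; linarith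
  have hnpos : (0:ℝ) < (n:ℝ) := by
    have : (0:ℕ) < n := by omega
    exact_mod_cast this
  have hpos : 0 < C * ((n:ℝ) * B) * D^(n-1) :=
    mul_pos (mul_pos hC (mul_pos hnpos hBpos)) (pow_pos hDpos _)
  rw [htarget]
  intro h0
  have hz : ∑ r ∈ S2, L (w ∘ r) = 0 :=
    Finset.sum_eq_zero (fun r hr => (hall r hr).trans h0)
  have := hz.symm.trans hstage2
  linarith
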